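/- arXiv:2012.04868 — 4 statements merged into one kernel-verified Lean document; each statement's English description precedes it below -/
import Mathlib

section
/- Let A ∈ ℤ^{n×(n+1)} have rank n, with all entries of the i-th row of absolute value at most d_i. Then any generator b = (b_1,...,b_{n+1}) ∈ ℤ^{n+1} of the right nullspace of A with gcd(b_1,...,b_{n+1}) = 1 satisfies |b_j| ≤ n^{n/2} · Π_{i=1}^n d_i for all j. -/
open Matrix Finset

lemma euc_sum_apply {m : ℕ} {α : Type*} (s : Finset α) (F : α → EuclideanSpace ℝ (Fin m))
    (k : Fin m) : (∑ x ∈ s, F x) k = ∑ x ∈ s, F x k := by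
  classical
  induction s using Finset.induction_on with
  | empty => simp
  | insert _ _ h ih => rw [Finset.sum_insert h, Finset.sum_insert h, PiLp.add_apply, ih]

lemma hadamard_abs_det_le {m : ℕ} (M : Matrix (Fin m) (Fin m) ℝ) :
    |M.det| ≤ ∏ i, Real.sqrt (∑ j, M i j ^ 2) := by
  classical
  haveI : WellFoundedLT (Fin m) := inferInstance
  set f : Fin m → EuclideanSpace ℝ (Fin m) := fun i => (WithLp.equiv 2 (Fin m → ℝ)).symm (M i) with hf
  set g : Fin m → EuclideanSpace ℝ (Fin m) := InnerProductSpace.gramSchmidt ℝ f with hg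
  have horth : ∀ {i j : Fin m}, i ≠ j → (inner ℝ (g i) (g j) : ℝ) = 0 := fun h =>
    InnerProductSpace.gramSchmidt_orthogonal ℝ f h
  have hnorm : ∀ i, ‖g i‖ ≤ ‖f i‖ := by
    intro i
    have hdef := InnerProductSpace.gramSchmidt_def' ℝ f i
    rw [← hg] at hdef
    set p : EuclideanSpace ℝ (Fin m) :=
      ∑ j ∈ Finset.Iio i, ((ℝ ∙ g j).starProjection (f i) : EuclideanSpace ℝ (Fin m)) with hp
    have hip : (inner ℝ (g i) p : ℝ) = 0 := by
      rw [hp, inner_sum]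
      refine Finset.sum_eq_zero fun j hj => ?_
      rw [Submodule.starProjection_singleton, inner_smul_right,
        horth (Finset.mem_Iio.mp hj).ne', mul_zero]
    have h2 : ‖f i‖ ^ 2 = ‖g i‖ ^ 2 + ‖p‖ ^ 2 := by
      rw [hdef, norm_add_sq_real, hip]; ring
    nlinarith [norm_nonneg (g i), norm_nonneg (f i), norm_nonneg p]
  set G : Matrix (Fin m) (Fin m) ℝ := Matrix.of fun i j => g i j with hG
  set T : Matrix (Fin m) (Fin m) ℝ := Matrix.of fun i j =>
    (if j = i then (1:ℝ) else 0) +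
      (if j < i then (inner ℝ (g j) (f i) : ℝ) / ‖g j‖ ^ 2 else 0) with hT
  have hMTG : M = T * G := by
    ext i k
    have hdef := InnerProductSpace.gramSchmidt_def'' ℝ f i
    rw [← hg] at hdef
    have hL : M i k = f i k := rfl
    have hIio : Finset.Iio i = Finset.univ.filter (fun j => j < i) := by
      ext j; simp
    rw [hL, hdef, PiLp.add_apply, euc_sum_apply]
    simp only [PiLp.smul_apply, smul_eq_mul, RCLike.ofReal_real_eq_id, id_eq]
    simp only [hT, hG, Matrix.of_apply, Matrix.mul_apply, add_mul, ite_mul, one_mul, zero_mul,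
      Finset.sum_add_distrib, Finset.sum_ite_eq' Finset.univ i, Finset.mem_univ, if_true,
      hIio, Finset.sum_filter]
  have hTdet : T.det = 1 := by
    have htri : T.BlockTriangular OrderDual.toDual := by
      intro i j hij
      have h1 : j ≠ i := (ne_of_gt hij)
      have h2 : ¬ j < i := not_lt_of_gt hij
      simp [hT, h1, h2]
    rw [Matrix.det_of_lowerTriangular T htri]
    simp [hT]
  have hGGt : G * Gᵀ = Matrix.diagonal fun i => ‖g i‖ ^ 2 := by
    ext i j
    have : (G * Gᵀ) i j = (inner ℝ (g i) (g j) : ℝ) := by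
      simp [Matrix.mul_apply, hG, PiLp.inner_apply, RCLike.inner_apply, conj_trivial, mul_comm]
    rw [this]
    rcases eq_or_ne i j with rfl | hij
    · rw [real_inner_self_eq_norm_sq]; simp
    · rw [horth hij, Matrix.diagonal_apply_ne _ hij]
  have hdet2 : M.det ^ 2 = ∏ i, ‖g i‖ ^ 2 := by
    have : M.det = G.det := by rw [hMTG, Matrix.det_mul, hTdet, one_mul]
    calc M.det ^ 2 = G.det * Gᵀ.det := by rw [this, Matrix.det_transpose, sq]
      _ = ∏ i, ‖g i‖ ^ 2 := by rw [← Matrix.det_mul, hGGt, Matrix.det_diagonal]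
  have hfnorm : ∀ i, ‖f i‖ = Real.sqrt (∑ j, M i j ^ 2) := by
    intro i
    rw [EuclideanSpace.norm_eq]
    congr 1
    refine Finset.sum_congr rfl fun j _ => ?_
    rw [Real.norm_eq_abs, sq_abs]
    rfl
  have h1 : M.det ^ 2 ≤ (∏ i, ‖f i‖) ^ 2 := by
    rw [hdet2, ← Finset.prod_pow]
    exact Finset.prod_le_prod (fun i _ => sq_nonneg _)
      (fun i _ => pow_le_pow_left₀ (norm_nonneg _) (hnorm i) 2)
  have h2 : |M.det| ≤ ∏ i, ‖f i‖ := by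
    have := Real.sqrt_le_sqrt h1
    rwa [Real.sqrt_sq_eq_abs, Real.sqrt_sq (Finset.prod_nonneg fun i _ => norm_nonneg _)] at this
  calc |M.det| ≤ ∏ i, ‖f i‖ := h2
    _ = _ := Finset.prod_congr rfl fun i _ => hfnorm i


theorem stmt4 {n : ℕ} (A : Matrix (Fin n) (Fin (n + 1)) ℤ)
    (hrank : (A.map (Int.cast : ℤ → ℚ)).rank = n)
    (d : Fin n → ℝ) (hd : ∀ i j, (|A i j| : ℝ) ≤ d i)
    (b : Fin (n + 1) → ℤ) (hb : b ≠ 0) (hker : A.mulVec b = 0)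
    (hgcd : Finset.univ.gcd b = 1) :
    ∀ j, (|b j| : ℝ) ≤ (n : ℝ) ^ ((n : ℝ) / 2) * ∏ i, d i := by
  classical
  set A' : Matrix (Fin n) (Fin (n + 1)) ℚ := A.map (Int.cast : ℤ → ℚ) with hA'
  set b' : Fin (n + 1) → ℚ := fun j => (b j : ℚ) with hb'
  set c : Fin (n + 1) → ℤ := fun j => (-1) ^ (j : ℕ) * (A.submatrix id j.succAbove).det with hc
  set c' : Fin (n + 1) → ℚ := fun j => (c j : ℚ) with hc'
  -- c is in the kernel of A
  have hAc : A.mulVec c = 0 := by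
    funext i
    have hB : (Matrix.of (Fin.cons (A i) A) : Matrix (Fin (n + 1)) (Fin (n + 1)) ℤ).det = 0 :=
      Matrix.det_zero_of_row_eq (Fin.succ_ne_zero i).symm (by
        funext s; rfl)
    rw [Matrix.det_succ_row_zero] at hB
    have hsub : ∀ j : Fin (n + 1),
        ((Matrix.of (Fin.cons (A i) A)).submatrix Fin.succ j.succAbove) =
          A.submatrix id j.succAbove := by
      intro j; ext r s; rfl
    show (∑ j, A i j * c j) = 0
    rw [← hB]
    refine Finset.sum_congr rfl fun j _ => ?_
    rw [hsub j, show (Matrix.of (Fin.cons (A i) A) : Matrix (Fin (n + 1)) (Fin (n + 1)) ℤ) 0 j = A i j from rfl]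
    simp [hc]
    ring
  -- cast of kernel facts to ℚ
  have hq_of_int : ∀ (v : Fin (n + 1) → ℤ), A.mulVec v = 0 →
      A'.mulVec (fun j => ((v j : ℚ))) = 0 := by
    intro v hv
    funext i
    have := congrFun hv i
    simp only [Matrix.mulVec, dotProduct, Pi.zero_apply] at this ⊢
    have : ((∑ j, A i j * v j : ℤ) : ℚ) = 0 := by rw [this]; simp
    push_cast at this
    simpa [hA'] using this
  have hkerb' : A'.mulVec b' = 0 := hq_of_int b hker
  have hkerc' : A'.mulVec c' = 0 := hq_of_int c hAc
  -- kernel has dimension one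
  have hrn : Module.finrank ℚ (LinearMap.range A'.mulVecLin) +
      Module.finrank ℚ (LinearMap.ker A'.mulVecLin) = n + 1 := by
    have := LinearMap.finrank_range_add_finrank_ker A'.mulVecLin
    rwa [Module.finrank_pi, Fintype.card_fin] at this
  have hrange : Module.finrank ℚ (LinearMap.range A'.mulVecLin) = n := hrank
  have hkerdim : Module.finrank ℚ (LinearMap.ker A'.mulVecLin) = 1 := by omega
  have hb'ne : b' ≠ 0 := by
    intro h
    apply hb
    funext j
    have := congrFun h j
    simpa [hb'] using this
  have hble : (Submodule.span ℚ {b'}) ≤ LinearMap.ker A'.mulVecLin := by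
    rw [Submodule.span_singleton_le_iff_mem, LinearMap.mem_ker]
    exact hkerb'
  have hspan : (Submodule.span ℚ {b'}) = LinearMap.ker A'.mulVecLin :=
    Submodule.eq_of_le_of_finrank_le hble
      (by rw [hkerdim, finrank_span_singleton hb'ne])
  -- c' = q • b'
  obtain ⟨q, hqb⟩ : ∃ q : ℚ, q • b' = c' :=
    Submodule.mem_span_singleton.mp (hspan ▸ LinearMap.mem_ker.mpr hkerc')
  -- q is a nonzero integer
  obtain ⟨j0, hj0⟩ : ∃ j0, b j0 ≠ 0 := Function.ne_iff.mp hb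
  have hcj0 : c j0 ≠ 0 := by
    have hbq0 : b' j0 ≠ 0 := by
      rw [hb']
      simpa using hj0
    have hdet : (A'.submatrix id j0.succAbove).det ≠ 0 := by
      intro h0
      obtain ⟨v, hv, hMv⟩ := Matrix.exists_mulVec_eq_zero_iff.mpr h0
      set w : Fin (n + 1) → ℚ := j0.insertNth 0 v with hw
      have hwker : A'.mulVec w = 0 := by
        funext i
        have hsplit := Fin.sum_univ_succAbove (fun j => A' i j * w j) j0
        show ∑ j, A' i j * w j = 0
        rw [hsplit, hw]
        rw [Fin.insertNth_apply_same, mul_zero, zero_add]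
        simp only [Fin.insertNth_apply_succAbove]
        have h5 := congrFun hMv i
        simp only [Matrix.mulVec, dotProduct, Pi.zero_apply, Matrix.submatrix_apply,
          id_eq] at h5
        exact h5
      have hwmem : w ∈ Submodule.span ℚ {b'} := by
        rw [hspan]
        exact LinearMap.mem_ker.mpr hwker
      obtain ⟨r, hr⟩ := Submodule.mem_span_singleton.mp hwmem
      have h0' : w j0 = 0 := by rw [hw, Fin.insertNth_apply_same]
      have hr0 : r = 0 := by
        have h6 := congrFun hr j0
        rw [h0'] at h6
        rcases mul_eq_zero.mp h6 with h | h
        · exact h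
        · exact absurd h hbq0
      apply hv
      funext k
      have h7 := congrFun hr (j0.succAbove k)
      rw [hr0, Pi.smul_apply, zero_smul] at h7
      have h8 : w (j0.succAbove k) = v k := by
        rw [hw, Fin.insertNth_apply_succAbove]
      rw [← h8, ← h7]
      rfl
    intro hcz
    apply hdet
    have hcast : (A'.submatrix id j0.succAbove).det =
        (((A.submatrix id j0.succAbove).det : ℤ) : ℚ) := by
      rw [hA', Matrix.submatrix_map]
      exact ((Int.castRingHom ℚ).map_det (A.submatrix id j0.succAbove)).symm
    rw [hcast]
    rw [hc] at hcz
    simp only [mul_eq_zero] at hcz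
    rcases hcz with h | h
    · exact absurd h (by positivity)
    · rw [h]; simp
  have hqne : q ≠ 0 := by
    intro h
    apply hcj0
    have h2 := congrFun hqb j0
    rw [h, Pi.smul_apply, zero_smul] at h2
    have h3 : c' j0 = 0 := h2.symm
    rw [hc'] at h3
    simp only at h3
    exact_mod_cast h3
  have hden : q.den = 1 := by
    have hdvd : ∀ j, (q.den : ℤ) ∣ b j := by
      intro j
      have h1 : q * b' j = c' j := by
        have := congrFun hqb j
        simpa [smul_eq_mul] using this
      have h2 : q.num * b j = (q.den : ℤ) * c j := by
        have hq : (q.num : ℚ) = q * (q.den : ℚ) := (Rat.mul_den_eq_num q).symm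
        have : ((q.num * b j : ℤ) : ℚ) = (((q.den : ℤ) * c j : ℤ) : ℚ) := by
          push_cast
          rw [hq]
          rw [mul_comm q ((q.den : ℚ))]
          rw [mul_assoc, h1]
        exact_mod_cast this
      have h3 : (q.den : ℤ) ∣ b j * q.num := by
        rw [mul_comm (q.num) (b j)] at h2
        exact ⟨c j, h2.symm ▸ rfl⟩
      have hcop : IsCoprime (q.den : ℤ) q.num := by
        rw [Int.isCoprime_iff_gcd_eq_one, Int.gcd]
        simpa [Nat.coprime_comm] using q.reduced
      exact hcop.dvd_of_dvd_mul_right h3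
    have : (q.den : ℤ) ∣ Finset.univ.gcd b := Finset.dvd_gcd fun j _ => hdvd j
    rw [hgcd] at this
    have := Int.eq_one_of_dvd_one (by positivity) this
    exact_mod_cast this
  have hqnum : ∀ j, c j = q.num * b j := by
    intro j
    have h1 : q * b' j = c' j := by
      have := congrFun hqb j
      simpa [smul_eq_mul] using this
    have hq : (q : ℚ) = (q.num : ℚ) := by
      conv_lhs => rw [← Rat.num_div_den q]
      rw [hden]; simp
    rw [hq] at h1
    have h2 : c' j = (q.num : ℚ) * b' j := h1.symm
    rw [hc', hb'] at h2
    simp only at h2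
    exact_mod_cast h2
  have hnum1 : 1 ≤ |q.num| := Int.one_le_abs (Rat.num_ne_zero.mpr hqne)
  -- |b j| ≤ |c j|
  have hbc : ∀ j, |b j| ≤ |c j| := by
    intro j
    rw [hqnum j, abs_mul]
    exact le_mul_of_one_le_left (abs_nonneg _) hnum1
  -- final bound via Hadamard
  intro j
  have hd0 : ∀ i, 0 ≤ d i := fun i => le_trans (by positivity) (hd i 0)
  set M : Matrix (Fin n) (Fin n) ℝ := (A.submatrix id j.succAbove).map (Int.cast : ℤ → ℝ)
    with hM
  have hMdet : M.det = (((A.submatrix id j.succAbove).det : ℤ) : ℝ) := by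
    rw [hM]
    exact ((Int.castRingHom ℝ).map_det (A.submatrix id j.succAbove)).symm
  have hsqrt : ∀ i, Real.sqrt (∑ k, M i k ^ 2) ≤ Real.sqrt (n : ℝ) * d i := by
    intro i
    have h1 : ∑ k, M i k ^ 2 ≤ ∑ _k : Fin n, d i ^ 2 := by
      refine Finset.sum_le_sum fun k _ => ?_
      rw [← sq_abs]
      refine pow_le_pow_left₀ (abs_nonneg _) ?_ 2
      have := hd i (j.succAbove k)
      simpa [hM] using this
    have h2 : ∑ _k : Fin n, d i ^ 2 = (n : ℝ) * d i ^ 2 := by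
      rw [Finset.sum_const, Finset.card_univ, Fintype.card_fin, nsmul_eq_mul]
    have h3 := Real.sqrt_le_sqrt (h1.trans_eq h2)
    rwa [Real.sqrt_mul (by positivity) (d i ^ 2), Real.sqrt_sq (hd0 i)] at h3
  have hpow : Real.sqrt (n : ℝ) ^ n = (n : ℝ) ^ ((n : ℝ) / 2) := by
    rw [Real.sqrt_eq_rpow, ← Real.rpow_natCast ((n : ℝ) ^ ((1:ℝ)/2)) n,
      ← Real.rpow_mul (by positivity)]
    congr 1
    ring
  calc (|b j| : ℝ) ≤ ((|c j| : ℤ) : ℝ) := by exact_mod_cast hbc j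
    _ = |M.det| := by
        rw [hMdet, ← Int.cast_abs]
        congr 1
        rw [hc]
        simp [abs_mul]
    _ ≤ ∏ i, Real.sqrt (∑ k, M i k ^ 2) := hadamard_abs_det_le M
    _ ≤ ∏ i, Real.sqrt (n : ℝ) * d i :=
        Finset.prod_le_prod (fun i _ => Real.sqrt_nonneg _) (fun i _ => hsqrt i)
    _ = Real.sqrt (n : ℝ) ^ n * ∏ i, d i := by
        rw [Finset.prod_mul_distrib, Finset.prod_const, Finset.card_univ, Fintype.card_fin]
    _ = (n : ℝ) ^ ((n : ℝ) / 2) * ∏ i, d i := by rw [hpow]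
end

section
/- Let a_1,...,a_n ∈ ℤ^n be linearly independent, A the matrix with columns a_j, and r the rank over 𝔽_2 of the mod-2 reduction of A. Then the monomial map m : (ℝ*)^n → (ℝ*)^n defined by m(x) = x^A is 2^{n-r}-to-1 onto its image. -/
open Matrix Finset

/-- sign character on `ZMod 2`. -/
noncomputable def sgn2 (e : ZMod 2) : ℝ := if e = 0 then 1 else -1

lemma sgn2_zero : sgn2 0 = 1 := by simp [sgn2]

lemma sgn2_one : sgn2 1 = -1 := by
  simp only [sgn2, if_neg (by decide : ¬(1 : ZMod 2) = 0)]

lemma sgn2_cases (e : ZMod 2) : e = 0 ∨ e = 1 := by revert e; decide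

lemma sgn2_ne_zero (e : ZMod 2) : sgn2 e ≠ 0 := by
  rcases sgn2_cases e with rfl | rfl <;> norm_num [sgn2_zero, sgn2_one]

lemma sgn2_add (a b : ZMod 2) : sgn2 (a + b) = sgn2 a * sgn2 b := by
  have h00 : (0 : ZMod 2) + 0 = 0 := by decide
  have h01 : (0 : ZMod 2) + 1 = 1 := by decide
  have h10 : (1 : ZMod 2) + 0 = 1 := by decide
  have h11 : (1 : ZMod 2) + 1 = 0 := by decide
  rcases sgn2_cases a with rfl | rfl <;> rcases sgn2_cases b with rfl | rfl <;>
    simp only [h00, h01, h10, h11, sgn2_zero, sgn2_one] <;> norm_num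

lemma sgn2_inj {a b : ZMod 2} (h : sgn2 a = sgn2 b) : a = b := by
  rcases sgn2_cases a with rfl | rfl <;> rcases sgn2_cases b with rfl | rfl <;>
    first
    | rfl
    | (rw [sgn2_zero, sgn2_one] at h; norm_num at h)
    | (rw [sgn2_one, sgn2_zero] at h; norm_num at h)

lemma sgn2_zpow (e : ZMod 2) (z : ℤ) : sgn2 e ^ z = sgn2 ((z : ZMod 2) * e) := by
  rcases sgn2_cases e with rfl | rfl
  · simp [sgn2_zero]
  · rw [mul_one, sgn2_one]
    by_cases h : (z : ZMod 2) = 0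
    · have hz : Even z := by
        rw [even_iff_two_dvd]
        exact_mod_cast (ZMod.intCast_zmod_eq_zero_iff_dvd z 2).mp h
      rw [h, sgn2_zero, hz.neg_one_zpow]
    · have hz : Odd z := by
        rw [Int.not_even_iff_odd.symm, even_iff_two_dvd]
        intro hd
        exact h ((ZMod.intCast_zmod_eq_zero_iff_dvd z 2).mpr (by exact_mod_cast hd))
      have h1 : (z : ZMod 2) = 1 := (sgn2_cases _).resolve_left h
      rw [h1, sgn2_one, hz.neg_one_zpow]

lemma sgn2_sum {ι : Type*} (s : Finset ι) (f : ι → ZMod 2) :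
    sgn2 (∑ i ∈ s, f i) = ∏ i ∈ s, sgn2 (f i) := by
  classical
  induction s using Finset.induction_on with
  | empty => simp [sgn2_zero]
  | insert _ _ h ih => rw [Finset.sum_insert h, Finset.prod_insert h, sgn2_add, ih]

lemma abs_zpow' (a : ℝ) (z : ℤ) : |a ^ z| = |a| ^ z := by
  cases z with
  | ofNat m => simp [zpow_natCast, abs_pow]
  | negSucc m => simp [zpow_negSucc, abs_inv, abs_pow]

/-- A positive solution of the monomial equations is trivial. -/
lemma pos_sol_trivial {n : ℕ} (A : Matrix (Fin n) (Fin n) ℤ)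
    (hindep : LinearIndependent ℚ fun j => fun i => (A i j : ℚ))
    (t : Fin n → ℝ) (ht : ∀ i, 0 < t i)
    (h : ∀ k, (∏ i, t i ^ A i k) = 1) : ∀ i, t i = 1 := by
  have hQ : IsUnit (A.map ((↑) : ℤ → ℚ)) := by
    rw [← Matrix.linearIndependent_cols_iff_isUnit]
    exact hindep
  have hdetQ : IsUnit ((A.map ((↑) : ℤ → ℚ)).det) := (Matrix.isUnit_iff_isUnit_det _).mp hQ
  have hmapQ : (A.map ((↑) : ℤ → ℚ)).det = ((A.det : ℤ) : ℚ) := by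
    rw [show (A.map ((↑) : ℤ → ℚ)) = (Int.castRingHom ℚ).mapMatrix A from rfl,
      ← RingHom.map_det]
    rfl
  have hdet : (A.det : ℤ) ≠ 0 := by
    intro h0
    rw [hmapQ, h0] at hdetQ
    simp at hdetQ
  set M : Matrix (Fin n) (Fin n) ℝ := A.map ((↑) : ℤ → ℝ) with hM
  have hdetR : M.det = ((A.det : ℤ) : ℝ) := by
    rw [hM, show (A.map ((↑) : ℤ → ℝ)) = (Int.castRingHom ℝ).mapMatrix A from rfl,
      ← RingHom.map_det]
    rfl
  have hR : IsUnit M := by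
    rw [Matrix.isUnit_iff_isUnit_det, hdetR, isUnit_iff_ne_zero]
    exact_mod_cast hdet
  set u : Fin n → ℝ := fun i => Real.log (t i) with hu
  have hker : u ᵥ* M = 0 ᵥ* M := by
    rw [Matrix.zero_vecMul]
    funext k
    have h0 : Real.log (∏ i, t i ^ A i k) = 0 := by rw [h k, Real.log_one]
    rw [Real.log_prod (fun i _ => zpow_ne_zero _ (ht i).ne')] at h0
    simp only [Real.log_zpow] at h0
    simp only [Matrix.vecMul, dotProduct, hM, Matrix.map_apply, Pi.zero_apply]
    rw [← h0]
    exact Finset.sum_congr rfl fun i _ => mul_comm _ _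
  have hu0 : u = 0 := Matrix.vecMul_injective_iff_isUnit.mpr hR hker
  intro i
  have : Real.log (t i) = 0 := congrFun hu0 i
  rw [← Real.exp_log (ht i), this, Real.exp_zero]

theorem stmt7 {n : ℕ} (A : Matrix (Fin n) (Fin n) ℤ)
    (hindep : LinearIndependent ℚ fun j => fun i => (A i j : ℚ))
    (r : ℕ) (hr : (A.map (Int.cast : ℤ → ZMod 2)).rank = r)
    (x : Fin n → ℝ) (hx : ∀ i, x i ≠ 0) :
    {x' : Fin n → ℝ | (∀ i, x' i ≠ 0) ∧
        ∀ k, (∏ i, x' i ^ A i k) = ∏ i, x i ^ A i k}.ncard = 2 ^ (n - r) := by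
  classical
  set B : Matrix (Fin n) (Fin n) (ZMod 2) := A.map (Int.cast : ℤ → ZMod 2) with hB
  set f : (Fin n → ZMod 2) → (Fin n → ℝ) := fun ε i => sgn2 (ε i) * x i with hf
  set Kset : Set (Fin n → ZMod 2) :=
    {ε | ∀ k, ∑ i, ((A i k : ZMod 2)) * ε i = 0} with hK
  have hPne : ∀ k, (∏ i, x i ^ A i k) ≠ 0 := fun k =>
    Finset.prod_ne_zero_iff.mpr fun i _ => zpow_ne_zero _ (hx i)
  have hexp : ∀ (ε : Fin n → ZMod 2) (k : Fin n),
      (∏ i, (sgn2 (ε i) * x i) ^ A i k)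
        = sgn2 (∑ i, (A i k : ZMod 2) * ε i) * ∏ i, x i ^ A i k := by
    intro ε k
    rw [sgn2_sum, ← Finset.prod_mul_distrib]
    refine Finset.prod_congr rfl fun i _ => ?_
    rw [mul_zpow, sgn2_zpow]
  have hSeq : {x' : Fin n → ℝ | (∀ i, x' i ≠ 0) ∧
      ∀ k, (∏ i, x' i ^ A i k) = ∏ i, x i ^ A i k} = f '' Kset := by
    ext x'
    constructor
    · rintro ⟨hx'ne, hx'⟩
      have habs : ∀ i, |x' i| = |x i| := by
        have ht : ∀ i, 0 < |x' i| / |x i| := fun i =>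
          div_pos (abs_pos.mpr (hx'ne i)) (abs_pos.mpr (hx i))
        have hprod : ∀ k, (∏ i, (|x' i| / |x i|) ^ A i k) = 1 := by
          intro k
          have : ∀ i, (|x' i| / |x i|) ^ A i k = |x' i ^ A i k| / |x i ^ A i k| := by
            intro i
            rw [div_zpow, abs_zpow', abs_zpow']
          rw [Finset.prod_congr rfl fun i _ => this i, Finset.prod_div_distrib,
            ← Finset.abs_prod, ← Finset.abs_prod, hx' k]
          exact div_self (abs_ne_zero.mpr (hPne k))
        intro i
        have h1 := pos_sol_trivial A hindep _ ht hprod i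
        exact (div_eq_one_iff_eq (abs_ne_zero.mpr (hx i))).mp h1
      set ε : Fin n → ZMod 2 := fun i => if x' i = x i then 0 else 1 with hε
      have hfe : f ε = x' := by
        funext i
        by_cases hi : x' i = x i
        · simp [hf, hε, hi, sgn2_zero]
        · have hxi : x' i = -x i := (abs_eq_abs.mp (habs i)).resolve_left hi
          have hε1 : ε i = 1 := by simp [hε, hi]
          show sgn2 (ε i) * x i = x' i
          rw [hε1, sgn2_one, hxi]
          ring
      have hεK : ε ∈ Kset := by
        intro k
        have h1 : (∏ i, (sgn2 (ε i) * x i) ^ A i k) = ∏ i, x i ^ A i k := by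
          have : (fun i => sgn2 (ε i) * x i) = x' := hfe
          rw [show (∏ i, (sgn2 (ε i) * x i) ^ A i k) = ∏ i, x' i ^ A i k from by
            rw [← this]]
          exact hx' k
        rw [hexp] at h1
        have h2 : sgn2 (∑ i, (A i k : ZMod 2) * ε i) = 1 :=
          mul_right_cancel₀ (hPne k) (by rw [h1, one_mul])
        rw [← sgn2_zero] at h2
        exact sgn2_inj h2
      exact ⟨ε, hεK, hfe⟩
    · rintro ⟨ε, hε, rfl⟩
      refine ⟨fun i => mul_ne_zero (sgn2_ne_zero _) (hx i), fun k => ?_⟩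
      show (∏ i, (sgn2 (ε i) * x i) ^ A i k) = _
      rw [hexp, hε k, sgn2_zero, one_mul]
  have hfinj : Function.Injective f := by
    intro a b hab
    funext i
    exact sgn2_inj (mul_right_cancel₀ (hx i) (congrFun hab i))
  rw [hSeq, Set.ncard_image_of_injective _ hfinj]
  have hKer : Kset = ↑(LinearMap.ker (Bᵀ.mulVecLin)) := by
    ext ε
    simp only [hK, Set.mem_setOf_eq, SetLike.mem_coe, LinearMap.mem_ker,
      Matrix.mulVecLin_apply]
    rw [funext_iff]
    refine (forall_congr' fun k => ?_).symm
    simp only [Matrix.mulVec, dotProduct, Matrix.transpose_apply, hB,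
      Matrix.map_apply, Pi.zero_apply]
  rw [hKer]
  letI : Fintype ↥(LinearMap.ker (Bᵀ.mulVecLin)) := Fintype.ofFinite _
  have hrank : Module.finrank (ZMod 2) ↥(LinearMap.range (Bᵀ.mulVecLin)) = r := by
    rw [show Module.finrank (ZMod 2) ↥(LinearMap.range (Bᵀ.mulVecLin)) = Bᵀ.rank from rfl,
      Matrix.rank_transpose, hB, hr]
  have h1 := LinearMap.finrank_range_add_finrank_ker (Bᵀ.mulVecLin)
  rw [Module.finrank_fin_fun, hrank] at h1
  have hker_rank : Module.finrank (ZMod 2) ↥(LinearMap.ker (Bᵀ.mulVecLin)) = n - r := by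
    omega
  rw [← Nat.card_coe_set_eq]
  show Nat.card ↥(LinearMap.ker (Bᵀ.mulVecLin)) = 2 ^ (n - r)
  rw [Nat.card_eq_fintype_card,
    show (Fintype.card ↥(LinearMap.ker (Bᵀ.mulVecLin)) : ℕ)
      = Fintype.card (ZMod 2) ^ Module.finrank (ZMod 2) ↥(LinearMap.ker (Bᵀ.mulVecLin)) from
    Module.card_eq_pow_finrank, ZMod.card, hker_rank]
end

section
/- Let a_1,...,a_n ∈ ℤ^n be linearly independent with matrix A, let UAV = S be a Smith normal form factorization with diagonal entries s_1 | s_2 | ... | s_n, and let r be the number of odd s_i. Given c ∈ (ℝ*)^n, set c' = c^V. Then the binomial system x^{a_i} = c_i (i = 1,...,n) has exactly 2^{n-r} roots in (ℝ*)^n if c'_i > 0 for all i ≥ r+1, and exactly 0 roots in (ℝ*)^n if c'_i < 0 for some i ≥ r+1. -/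
open Finset

private lemma zpow_sum'' {G : Type*} [CommGroup G] (a : G) {ι : Type*} (s : Finset ι) (f : ι → ℤ) :
    a ^ (∑ i ∈ s, f i) = ∏ i ∈ s, a ^ f i := by
  classical
  induction s using Finset.induction with
  | empty => simp
  | insert _ _ h ih => rw [Finset.sum_insert h, Finset.prod_insert h, zpow_add, ih]

private def phiMap {n : ℕ} (M : Matrix (Fin n) (Fin n) ℤ) (x : Fin n → ℝˣ) : Fin n → ℝˣ :=
  fun j => ∏ k, x k ^ M k j

private lemma phiMap_mul {n : ℕ} (M N : Matrix (Fin n) (Fin n) ℤ) (x : Fin n → ℝˣ) :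
    phiMap (M * N) x = phiMap N (phiMap M x) := by
  funext j
  show ∏ k, x k ^ (M * N) k j = ∏ l, (∏ k, x k ^ M k l) ^ N l j
  have : ∀ l, (∏ k, x k ^ M k l) ^ N l j = ∏ k, x k ^ (M k l * N l j) := by
    intro l
    rw [← Finset.prod_zpow]
    exact Finset.prod_congr rfl fun k _ => (zpow_mul _ _ _).symm
  simp only [this, Matrix.mul_apply]
  rw [Finset.prod_comm]
  exact Finset.prod_congr rfl fun k _ => (zpow_sum'' _ _ _)

private lemma phiMap_one {n : ℕ} (x : Fin n → ℝˣ) : phiMap 1 x = x := by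
  funext j
  show ∏ k, x k ^ (1 : Matrix (Fin n) (Fin n) ℤ) k j = x j
  rw [Finset.prod_eq_single j (fun b _ hb => by rw [Matrix.one_apply_ne hb, zpow_zero])
    (fun h => absurd (Finset.mem_univ j) h)]
  rw [Matrix.one_apply_eq, zpow_one]

private lemma phiMap_bijective {n : ℕ} {M : Matrix (Fin n) (Fin n) ℤ} (hM : IsUnit M.det) :
    Function.Bijective (phiMap M) := by
  refine Function.bijective_iff_has_inverse.2 ⟨phiMap M⁻¹, fun x => ?_, fun x => ?_⟩
  · rw [← phiMap_mul, Matrix.mul_nonsing_inv _ hM, phiMap_one]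
  · rw [← phiMap_mul, Matrix.nonsing_inv_mul _ hM, phiMap_one]

private lemma val_prod_zpow {n : ℕ} (y : Fin n → ℝˣ) (f : Fin n → ℤ) :
    ((∏ k, y k ^ f k : ℝˣ) : ℝ) = ∏ k, (y k : ℝ) ^ f k := by
  rw [← Units.coeHom_apply, map_prod]
  exact Finset.prod_congr rfl fun k _ => Units.val_zpow_eq_zpow_val _ _

private lemma exists_pos_root {m : ℕ} (hm : m ≠ 0) {e : ℝ} (he : 0 < e) :
    ∃ u : ℝ, 0 < u ∧ u ^ m = e := by
  refine ⟨e ^ ((m : ℝ)⁻¹), Real.rpow_pos_of_pos he _, ?_⟩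
  rw [← Real.rpow_natCast (e ^ ((m : ℝ)⁻¹)) m, ← Real.rpow_mul he.le,
    inv_mul_cancel₀ (by exact_mod_cast hm), Real.rpow_one]

private lemma ncard_odd {m : ℕ} (hm : Odd m) {e : ℝ} (he : e ≠ 0) :
    {t : ℝ | t ^ m = e}.ncard = 1 := by
  have hmono := Odd.strictMono_pow (R := ℝ) hm
  have hm0 : m ≠ 0 := by rintro rfl; exact (Nat.not_odd_iff_even.2 Even.zero) hm
  rw [Set.ncard_eq_one]
  rcases lt_or_gt_of_ne he with hneg | hpos
  · obtain ⟨u, hu, hue⟩ := exists_pos_root hm0 (neg_pos.2 hneg)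
    have hroot : (-u) ^ m = e := by rw [hm.neg_pow, hue]; ring
    exact ⟨-u, Set.eq_singleton_iff_unique_mem.2
      ⟨hroot, fun t ht => hmono.injective (ht.trans hroot.symm)⟩⟩
  · obtain ⟨u, hu, hue⟩ := exists_pos_root hm0 hpos
    exact ⟨u, Set.eq_singleton_iff_unique_mem.2
      ⟨hue, fun t ht => hmono.injective (ht.trans hue.symm)⟩⟩

private lemma ncard_even_pos {m : ℕ} (hm : Even m) (hm0 : m ≠ 0) {e : ℝ} (he : 0 < e) :
    {t : ℝ | t ^ m = e}.ncard = 2 := by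
  obtain ⟨u, hu, hue⟩ := exists_pos_root hm0 he
  have hset : {t : ℝ | t ^ m = e} = {u, -u} := by
    ext t
    simp only [Set.mem_setOf_eq, Set.mem_insert_iff, Set.mem_singleton_iff]
    constructor
    · intro ht
      have habs : |t| ^ m = u ^ m := by rw [← abs_pow, ht, abs_of_pos he, hue]
      have : |t| = u := (pow_left_strictMonoOn₀ hm0).injOn (abs_nonneg t) hu.le habs
      rw [← abs_eq hu.le]; exact this
    · rintro (rfl | rfl)
      · exact hue
      · rw [hm.neg_pow, hue]
  rw [hset, Set.ncard_pair (by intro h; nlinarith)]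

private lemma empty_even_neg {m : ℕ} (hm : Even m) {e : ℝ} (he : e < 0) :
    {t : ℝ | t ^ m = e} = ∅ := by
  ext t
  simp only [Set.mem_setOf_eq, Set.mem_empty_iff_false, iff_false]
  intro ht
  exact absurd (ht ▸ hm.pow_nonneg t) (not_le.2 he)

private lemma card_root_set (s : ℤ) (hs : s ≠ 0) (d : ℝˣ) :
    (Odd s → Nat.card {t : ℝˣ | t ^ s = d} = 1) ∧
    (Even s → 0 < (d : ℝ) → Nat.card {t : ℝˣ | t ^ s = d} = 2) ∧
    (Even s → (d : ℝ) < 0 → {t : ℝˣ | t ^ s = d} = ∅) := by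
  have hd : (d : ℝ) ≠ 0 := d.ne_zero
  have hm0 : s.natAbs ≠ 0 := Int.natAbs_ne_zero.2 hs
  obtain ⟨e, hepos, heneg, hset⟩ :
      ∃ e : ℝ, (0 < e ↔ 0 < (d : ℝ)) ∧ (e < 0 ↔ (d : ℝ) < 0) ∧
        ∀ t : ℝˣ, t ^ s = d ↔ (t : ℝ) ^ s.natAbs = e := by
    have hval : ∀ t : ℝˣ, t ^ s = d ↔ ((t : ℝ)) ^ s = (d : ℝ) := by
      intro t
      rw [Units.ext_iff, Units.val_zpow_eq_zpow_val]
    rcases le_or_gt 0 s with h | h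
    · refine ⟨(d : ℝ), Iff.rfl, Iff.rfl, fun t => ?_⟩
      rw [hval, ← zpow_natCast, Int.natAbs_of_nonneg h]
    · refine ⟨(d : ℝ)⁻¹, inv_pos, inv_neg'', fun t => ?_⟩
      rw [hval]
      have hnat : ((s.natAbs : ℤ)) = -s := Int.ofNat_natAbs_of_nonpos h.le
      rw [← zpow_natCast, hnat, zpow_neg, inv_eq_iff_eq_inv, inv_inv]
  have he0 : e ≠ 0 := by
    rcases hd.lt_or_gt with h | h
    · exact (heneg.2 h).ne
    · exact (hepos.2 h).ne'
  have hcard : Nat.card {t : ℝˣ | t ^ s = d} = Nat.card {t : ℝ | t ^ s.natAbs = e} := by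
    refine Nat.card_congr
      { toFun := fun t => ⟨(t : ℝˣ), (hset _).1 t.2⟩
        invFun := fun t => ⟨Units.mk0 t.1 (fun h0 => he0 (by rw [← t.2, h0, zero_pow hm0])),
          (hset _).2 t.2⟩
        left_inv := fun t => Subtype.ext (Units.ext rfl)
        right_inv := fun t => Subtype.ext rfl }
  refine ⟨fun hodd => ?_, fun heven hdp => ?_, fun heven hdn => ?_⟩
  · rw [hcard, Nat.card_coe_set_eq, ncard_odd (Int.natAbs_odd.2 hodd) he0]
  · rw [hcard, Nat.card_coe_set_eq,
      ncard_even_pos (Int.natAbs_even.2 heven) hm0 (hepos.2 hdp)]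
  · have hemp := empty_even_neg (Int.natAbs_even.2 heven) (heneg.2 hdn)
    ext t
    simp only [Set.mem_setOf_eq, Set.mem_empty_iff_false, iff_false]
    intro ht
    have : (t : ℝ) ∈ {t : ℝ | t ^ s.natAbs = e} := (hset t).1 ht
    rw [hemp] at this
    exact this
theorem stmt8 {n : ℕ} (A U V S : Matrix (Fin n) (Fin n) ℤ)
    (hindep : LinearIndependent ℚ fun j => fun i => (A i j : ℚ))
    (hU : IsUnit U.det) (hV : IsUnit V.det)
    (hUAV : U * A * V = S)
    (hdiag : ∀ i j, i ≠ j → S i j = 0)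
    (hdvd : ∀ i j : Fin n, i ≤ j → S i i ∣ S j j)
    (r : ℕ) (hr : ∀ i : Fin n, Odd (S i i) ↔ (i : ℕ) < r)
    (c : Fin n → ℝ) (hc : ∀ i, c i ≠ 0)
    (c' : Fin n → ℝ) (hc' : ∀ j, c' j = ∏ i, c i ^ V i j) :
    ((∀ i : Fin n, r ≤ (i : ℕ) → 0 < c' i) →
      {x : Fin n → ℝ | (∀ i, x i ≠ 0) ∧
          ∀ j, (∏ k, x k ^ A k j) = c j}.ncard = 2 ^ (n - r)) ∧
    ((∃ i : Fin n, r ≤ (i : ℕ) ∧ c' i < 0) →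
      {x : Fin n → ℝ | (∀ i, x i ≠ 0) ∧
          ∀ j, (∏ k, x k ^ A k j) = c j} = ∅) := by
  classical
  -- nonvanishing of c'
  have hc'ne : ∀ j, c' j ≠ 0 := by
    intro j
    rw [hc' j]
    exact Finset.prod_ne_zero_iff.2 fun k _ => zpow_ne_zero _ (hc k)
  set cu : Fin n → ℝˣ := fun i => Units.mk0 (c i) (hc i) with hcu
  set c'u : Fin n → ℝˣ := fun j => Units.mk0 (c' j) (hc'ne j) with hc'u
  have hVcu : phiMap V cu = c'u := by
    funext j
    refine Units.ext ?_
    show ((∏ k, cu k ^ V k j : ℝˣ) : ℝ) = c' j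
    rw [val_prod_zpow, hc' j]
    rfl
  -- determinants: S j j ≠ 0
  have hAdet : A.det ≠ 0 := by
    have hB : IsUnit (A.map (Int.cast : ℤ → ℚ)) :=
      Matrix.linearIndependent_cols_iff_isUnit.1 hindep
    have hBdet : IsUnit (A.map (Int.cast : ℤ → ℚ)).det :=
      (Matrix.isUnit_iff_isUnit_det _).1 hB
    have : ((A.det : ℤ) : ℚ) ≠ 0 := by
      have h2 : ((A.det : ℚ)) = (A.map (Int.cast : ℤ → ℚ)).det :=
        RingHom.map_det (Int.castRingHom ℚ) A
      rw [h2]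
      exact hBdet.ne_zero
    exact_mod_cast this
  have hSne : ∀ j, S j j ≠ 0 := by
    have hdet : S.det = ∏ i, S i i := by
      have hdS : S = Matrix.diagonal fun i => S i i := by
        ext i j
        by_cases h : i = j
        · subst h; rw [Matrix.diagonal_apply_eq]
        · rw [Matrix.diagonal_apply_ne _ h, hdiag i j h]
      conv_lhs => rw [hdS]
      rw [Matrix.det_diagonal]
    have hSdet : S.det ≠ 0 := by
      rw [← hUAV, Matrix.det_mul, Matrix.det_mul]
      exact mul_ne_zero (mul_ne_zero hU.ne_zero hAdet) hV.ne_zero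
    rw [hdet] at hSdet
    exact fun j => Finset.prod_ne_zero_iff.1 hSdet j (Finset.mem_univ j)
  -- diagonal evaluation
  have hdiagS : ∀ (y : Fin n → ℝˣ) j, phiMap S y j = y j ^ S j j := by
    intro y j
    show ∏ k, y k ^ S k j = y j ^ S j j
    exact Finset.prod_eq_single j (fun b _ hb => by rw [hdiag b j hb, zpow_zero])
      (fun h => absurd (Finset.mem_univ j) h)
  set T : Fin n → Set ℝˣ := fun j => {t : ℝˣ | t ^ S j j = c'u j} with hT
  -- the solution set as preimage
  have hAV : A * V = U⁻¹ * S := by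
    have := congrArg (fun M => U⁻¹ * M) hUAV
    simpa only [← Matrix.mul_assoc, Matrix.nonsing_inv_mul _ hU, Matrix.one_mul] using this
  have hSolPre : {x : Fin n → ℝˣ | phiMap A x = cu} =
      (phiMap U⁻¹) ⁻¹' (Set.univ.pi T) := by
    ext x
    rw [Set.mem_setOf_eq, Set.mem_preimage, Set.mem_univ_pi]
    constructor
    · intro h
      intro j
      show phiMap U⁻¹ x j ^ S j j = c'u j
      rw [← hdiagS, ← phiMap_mul, ← hAV, phiMap_mul, h, hVcu]
    · intro h
      have h' : phiMap (A * V) x = c'u := by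
        rw [hAV, phiMap_mul]
        funext j
        rw [hdiagS]
        exact h j
      apply (phiMap_bijective hV).injective
      rw [← phiMap_mul, h', hVcu]
  have hRS : {x : Fin n → ℝ | (∀ i, x i ≠ 0) ∧ ∀ j, (∏ k, x k ^ A k j) = c j} =
      (fun (y : Fin n → ℝˣ) i => (y i : ℝ)) '' {x : Fin n → ℝˣ | phiMap A x = cu} := by
    ext x
    constructor
    · rintro ⟨hx0, hxe⟩
      refine ⟨fun i => Units.mk0 (x i) (hx0 i), ?_, rfl⟩
      show phiMap A _ = cu
      funext j
      refine Units.ext ?_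
      show ((∏ k, Units.mk0 (x k) (hx0 k) ^ A k j : ℝˣ) : ℝ) = c j
      rw [val_prod_zpow]
      exact hxe j
    · rintro ⟨y, hy, rfl⟩
      refine ⟨fun i => (y i).ne_zero, fun j => ?_⟩
      have h1 : ((∏ k, y k ^ A k j : ℝˣ) : ℝ) = ∏ k, ((y k : ℝ)) ^ A k j := val_prod_zpow y _
      rw [← h1]
      show ((phiMap A y j : ℝˣ) : ℝ) = c j
      rw [hy]
      rfl
  have hinj : Function.Injective (fun (y : Fin n → ℝˣ) i => (y i : ℝ)) := by
    intro a b h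
    funext i
    exact Units.ext (congrFun h i)
  -- counts
  have hbijU : Function.Bijective (phiMap (U⁻¹ : Matrix (Fin n) (Fin n) ℤ)) :=
    phiMap_bijective (Matrix.isUnit_nonsing_inv_det _ hU)
  set eU := Equiv.ofBijective _ hbijU with heU
  have hcard1 : {x : Fin n → ℝ | (∀ i, x i ≠ 0) ∧ ∀ j, (∏ k, x k ^ A k j) = c j}.ncard =
      (Set.univ.pi T).ncard := by
    rw [hRS, Set.ncard_image_of_injective _ hinj, hSolPre]
    have hpre : (phiMap (U⁻¹ : Matrix (Fin n) (Fin n) ℤ)) ⁻¹' (Set.univ.pi T) =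
        eU.symm '' (Set.univ.pi T) := by
      rw [(eU.symm.image_eq_preimage_symm _), Equiv.symm_symm]
      rfl
    rw [hpre, Set.ncard_image_of_injective _ eU.symm.injective]
  have hcard2 : (Set.univ.pi T).ncard = ∏ j, Nat.card (T j) := by
    rw [← Nat.card_coe_set_eq, Nat.card_congr (Equiv.Set.univPi T), Nat.card_pi]
  constructor
  · -- positive case
    intro hpos
    have hTcard : ∀ j, Nat.card (T j) = if (j : ℕ) < r then 1 else 2 := by
      intro j
      by_cases h : (j : ℕ) < r
      · rw [if_pos h]
        exact (card_root_set _ (hSne j) (c'u j)).1 ((hr j).2 h)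
      · rw [if_neg h]
        refine (card_root_set _ (hSne j) (c'u j)).2.1 (Int.not_odd_iff_even.1 ((hr j).not.2 h)) ?_
        show (0 : ℝ) < c' j
        exact hpos j (not_lt.1 h)
    rw [hcard1, hcard2]
    calc (∏ j, Nat.card (T j)) = ∏ j : Fin n, (if (j : ℕ) < r then 1 else 2) :=
          Finset.prod_congr rfl fun j _ => hTcard j
      _ = 2 ^ (n - r) := by
          rw [Finset.prod_ite, Finset.prod_const_one, Finset.prod_const, one_mul]
          congr 1
          rw [Finset.card_filter, Fin.sum_univ_eq_sum_range (fun i => if ¬ i < r then 1 else 0),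
            ← Finset.card_filter]
          have : (Finset.range n).filter (fun i => ¬ i < r) =
              (Finset.Ico 0 n).filter (fun i => r ≤ i) := by
            rw [Finset.range_eq_Ico]
            exact Finset.filter_congr fun i _ => by simp [not_lt]
          rw [this, Finset.Ico_filter_le, Nat.card_Ico, max_eq_right (Nat.zero_le r)]
  · -- negative case
    rintro ⟨i, hi, hci⟩
    have hTi : T i = ∅ := by
      refine (card_root_set _ (hSne i) (c'u i)).2.2
        (Int.not_odd_iff_even.1 ((hr i).not.2 (not_lt.2 hi))) ?_
      show c' i < 0
      exact hci
    rw [hRS, hSolPre, Set.univ_pi_eq_empty hTi, Set.preimage_empty, Set.image_empty]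
end

section
/- If β is an algebraic number with minimal polynomial m ∈ ℤ[x] (with coprime integer coefficients) of degree d, then h(β) ≤ (log |m|_2)/d, where |m|_2 is the Euclidean norm of the coefficient vector of m. -/
open Polynomial

/-- Sum of squared norms of the coefficients of a complex polynomial. -/
noncomputable def nsq (p : Polynomial ℂ) : ℝ := ∑ i ∈ p.support, ‖p.coeff i‖ ^ 2

lemma nsq_eq_sum_range (p : Polynomial ℂ) (N : ℕ) (h : p.natDegree < N) :
    nsq p = ∑ i ∈ Finset.range N, ‖p.coeff i‖ ^ 2 := by
  refine Finset.sum_subset (Polynomial.supp_subset_range h) ?_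
  intro i _ hi
  simp [Polynomial.notMem_support_iff.mp hi]

lemma nsq_nonneg (p : Polynomial ℂ) : 0 ≤ nsq p :=
  Finset.sum_nonneg fun _ _ => sq_nonneg _

lemma sq_norm_coeff_le_nsq (p : Polynomial ℂ) (k : ℕ) : ‖p.coeff k‖ ^ 2 ≤ nsq p := by
  by_cases h : p.coeff k = 0
  · simp [h, nsq_nonneg]
  · exact Finset.single_le_sum (fun i _ => sq_nonneg ‖p.coeff i‖)
      (Polynomial.mem_support_iff.mpr h)

lemma key_id (α a b : ℂ) :
    ‖a - α * b‖ ^ 2 = ‖(starRingEnd ℂ) α * a - b‖ ^ 2 + (1 - ‖α‖ ^ 2) * (‖a‖ ^ 2 - ‖b‖ ^ 2) := by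
  obtain ⟨x, y⟩ := α; obtain ⟨u, v⟩ := a; obtain ⟨s, t⟩ := b
  simp only [Complex.sq_norm]
  simp [Complex.normSq_apply, Complex.mul_re, Complex.mul_im, Complex.sub_re, Complex.sub_im]
  ring

lemma nsq_swap (α : ℂ) (q : Polynomial ℂ) :
    nsq ((X - C α) * q) = nsq ((C ((starRingEnd ℂ) α) * X - 1) * q) := by
  by_cases hq : q = 0
  · simp [hq, nsq]
  set N := q.natDegree with hN
  have hd1 : ((X - C α) * q).natDegree < N + 2 := by
    calc ((X - C α) * q).natDegree ≤ (X - C α).natDegree + q.natDegree :=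
          Polynomial.natDegree_mul_le
      _ ≤ 1 + N := by simp [Polynomial.natDegree_X_sub_C]; omega
      _ < N + 2 := by omega
  have hd2 : ((C ((starRingEnd ℂ) α) * X - 1) * q).natDegree < N + 2 := by
    have h1 : (C ((starRingEnd ℂ) α) * X - 1).natDegree ≤ 1 := by
      have : (C ((starRingEnd ℂ) α) * X - 1 : Polynomial ℂ)
          = C ((starRingEnd ℂ) α) * X + C (-1) := by simp [sub_eq_add_neg]
      rw [this]
      refine le_trans (Polynomial.natDegree_add_le _ _) ?_
      simp [Polynomial.natDegree_C]
      exact le_trans (Polynomial.natDegree_C_mul_le _ _) (by simp)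
    calc ((C ((starRingEnd ℂ) α) * X - 1) * q).natDegree
        ≤ (C ((starRingEnd ℂ) α) * X - 1).natDegree + q.natDegree :=
          Polynomial.natDegree_mul_le
      _ ≤ 1 + N := by omega
      _ < N + 2 := by omega
  rw [nsq_eq_sum_range _ (N + 2) hd1, nsq_eq_sum_range _ (N + 2) hd2]
  conv_lhs => rw [Finset.sum_range_succ']
  conv_rhs => rw [Finset.sum_range_succ']
  have cf : ∀ k, ((X - C α) * q).coeff (k + 1) = q.coeff k - α * q.coeff (k + 1) := by
    intro k; rw [sub_mul]; simp [Polynomial.coeff_X_mul]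
  have cf0 : ((X - C α) * q).coeff 0 = -(α * q.coeff 0) := by
    rw [Polynomial.mul_coeff_zero]; simp
  have cg : ∀ k, ((C ((starRingEnd ℂ) α) * X - 1) * q).coeff (k + 1)
      = (starRingEnd ℂ) α * q.coeff k - q.coeff (k + 1) := by
    intro k; rw [sub_mul, one_mul, mul_assoc]
    simp [Polynomial.coeff_X_mul]
  have cg0 : ((C ((starRingEnd ℂ) α) * X - 1) * q).coeff 0 = -(q.coeff 0) := by
    rw [Polynomial.mul_coeff_zero]; simp
  simp only [cf, cf0, cg, cg0]
  have hsum : ∑ k ∈ Finset.range (N + 1), ‖q.coeff k - α * q.coeff (k + 1)‖ ^ 2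
      = (∑ k ∈ Finset.range (N + 1), ‖(starRingEnd ℂ) α * q.coeff k - q.coeff (k + 1)‖ ^ 2)
        + (1 - ‖α‖ ^ 2) * ‖q.coeff 0‖ ^ 2 := by
    rw [Finset.sum_congr rfl fun k _ => key_id α (q.coeff k) (q.coeff (k + 1)),
      Finset.sum_add_distrib, ← Finset.mul_sum,
      Finset.sum_range_sub' fun k => ‖q.coeff k‖ ^ 2]
    have : q.coeff (N + 1) = 0 :=
      Polynomial.coeff_eq_zero_of_natDegree_lt (by omega)
    simp [this]
  rw [hsum]
  simp only [norm_neg, norm_mul]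
  ring

/-- The modified linear factor used in Landau's argument. -/
noncomputable def lfac (z : ℂ) : Polynomial ℂ :=
  if 1 < ‖z‖ then C ((starRingEnd ℂ) z) * X - 1 else X - C z

lemma nsq_lfac (z : ℂ) (q : Polynomial ℂ) : nsq ((X - C z) * q) = nsq (lfac z * q) := by
  unfold lfac
  split
  · exact nsq_swap z q
  · rfl

lemma leadingCoeff_lfac (z : ℂ) : ‖(lfac z).leadingCoeff‖ = max ‖z‖ 1 := by
  unfold lfac
  split
  case isTrue h =>
    have hz : (starRingEnd ℂ) z ≠ 0 := by
      intro h0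
      rw [show z = 0 by simpa using congrArg (starRingEnd ℂ) h0] at h
      simp at h; linarith
    rw [show (C ((starRingEnd ℂ) z) * X - 1 : Polynomial ℂ)
        = C ((starRingEnd ℂ) z) * X + C (-1) by simp [sub_eq_add_neg],
      Polynomial.leadingCoeff_linear hz]
    rw [max_eq_left h.le]
    simp
  case isFalse h =>
    rw [Polynomial.leadingCoeff_X_sub_C]
    rw [max_eq_right (not_lt.mp h)]
    simp

lemma nsq_prod_swap (s : Multiset ℂ) : ∀ q : Polynomial ℂ,
    nsq ((s.map fun z => X - C z).prod * q) = nsq ((s.map lfac).prod * q) := by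
  induction s using Multiset.induction with
  | empty => intro q; simp
  | cons z s ih =>
    intro q
    simp only [Multiset.map_cons, Multiset.prod_cons]
    rw [mul_assoc,
      show (X - C z) * ((s.map fun z => X - C z).prod * q)
        = (s.map fun z => X - C z).prod * ((X - C z) * q) by ring,
      ih ((X - C z) * q),
      show (s.map lfac).prod * ((X - C z) * q)
        = (X - C z) * ((s.map lfac).prod * q) by ring,
      nsq_lfac z ((s.map lfac).prod * q), mul_assoc]

/-- Landau's inequality: the Mahler measure squared is bounded by the sum of
squared coefficient norms. -/
lemma landau (p : Polynomial ℂ) :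
    (‖p.leadingCoeff‖ * ((p.roots.map fun z => max ‖z‖ 1).prod)) ^ 2 ≤ nsq p := by
  have hsplit : Splits p := IsAlgClosed.splits p
  have hfac : p = C p.leadingCoeff * (p.roots.map fun a => X - C a).prod :=
    hsplit.eq_prod_roots
  set P := (p.roots.map lfac).prod * C p.leadingCoeff with hP
  have h1 : nsq p = nsq P := by
    conv_lhs => rw [hfac, mul_comm]
    exact nsq_prod_swap p.roots (C p.leadingCoeff)
  have h2 : ‖P.leadingCoeff‖ = ‖p.leadingCoeff‖ * ((p.roots.map fun z => max ‖z‖ 1).prod) := by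
    rw [hP, Polynomial.leadingCoeff_mul, Polynomial.leadingCoeff_multiset_prod,
      Polynomial.leadingCoeff_C, norm_mul,
      show ∀ t : Multiset ℂ, ‖t.prod‖ = (t.map fun x => ‖x‖).prod from fun t =>
        map_multiset_prod (normHom.toMonoidHom : ℂ →* ℝ) t, mul_comm]
    congr 1
    rw [Multiset.map_map, Multiset.map_map]
    exact congrArg Multiset.prod (Multiset.map_congr rfl fun z _ => leadingCoeff_lfac z)
  rw [← h2, h1]
  exact sq_norm_coeff_le_nsq P P.natDegree

lemma log_prod_max (s : Multiset ℂ) :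
    Real.log ((s.map fun z => max ‖z‖ 1).prod) = (s.map fun z => Real.log (max ‖z‖ 1)).sum
    ∧ 1 ≤ (s.map fun z => max ‖z‖ 1).prod := by
  induction s using Multiset.induction with
  | empty => simp
  | cons z s ih =>
    obtain ⟨ih1, ih2⟩ := ih
    simp only [Multiset.map_cons, Multiset.prod_cons, Multiset.sum_cons]
    constructor
    · rw [Real.log_mul (by positivity) (by linarith), ih1]
    · nlinarith [le_max_right ‖z‖ (1:ℝ)]

/-- The absolute logarithmic Weil height of an algebraic number, expressed via
its (primitive, irreducible) integer minimal polynomial `m`. -/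
noncomputable def algLogHeight (m : Polynomial ℤ) : ℝ :=
  (1 / (m.natDegree : ℝ)) *
    (Real.log |(m.leadingCoeff : ℝ)| +
      (((m.map (Int.castRingHom ℂ)).roots).map fun z => Real.log (max ‖z‖ 1)).sum)

theorem stmt10 (m : Polynomial ℤ) (hirr : Irreducible m)
    (β : ℂ) (hroot : Polynomial.aeval β m = 0) :
    algLogHeight m ≤
      Real.log (Real.sqrt (∑ i ∈ Finset.range (m.natDegree + 1), ((m.coeff i : ℝ)) ^ 2)) /
        (m.natDegree : ℝ) := by
  have hm0 : m ≠ 0 := hirr.ne_zero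
  set p : Polynomial ℂ := m.map (Int.castRingHom ℂ) with hp
  have hinj : Function.Injective (Int.castRingHom ℂ) := fun a b h => Int.cast_injective h
  have hp0 : p ≠ 0 := by
    simpa [hp, Polynomial.map_eq_zero_iff hinj] using hm0
  have hdeg : p.natDegree = m.natDegree := Polynomial.natDegree_map_eq_of_injective hinj m
  have hd1 : 1 ≤ m.natDegree := by
    rcases Nat.eq_zero_or_pos m.natDegree with h0 | h; swap
    · exact h
    exfalso
    have : m = C (m.coeff 0) := Polynomial.eq_C_of_natDegree_eq_zero h0
    rw [this] at hroot
    simp at hroot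
    exact hm0 (by rw [this, hroot]; simp)
  have hdpos : (0 : ℝ) < (m.natDegree : ℝ) := by exact_mod_cast hd1
  have hlc : p.leadingCoeff = ((m.leadingCoeff : ℤ) : ℂ) := by
    rw [Polynomial.leadingCoeff, hdeg, Polynomial.coeff_map]
    rfl
  have hlcnorm : ‖p.leadingCoeff‖ = |(m.leadingCoeff : ℝ)| := by
    rw [hlc]
    push_cast
    exact Complex.norm_intCast _
  have hnsq : nsq p = ∑ i ∈ Finset.range (m.natDegree + 1), ((m.coeff i : ℝ)) ^ 2 := by
    rw [nsq_eq_sum_range p (m.natDegree + 1) (by omega)]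
    refine Finset.sum_congr rfl fun i _ => ?_
    rw [hp, Polynomial.coeff_map]
    have : ((Int.castRingHom ℂ) (m.coeff i)) = (((m.coeff i : ℝ) : ℂ)) := by push_cast; rfl
    rw [this]
    simp [Complex.norm_real, Real.norm_eq_abs, sq_abs]
  set M : ℝ := ‖p.leadingCoeff‖ * ((p.roots.map fun z => max ‖z‖ 1).prod) with hM
  obtain ⟨hlog, hge1⟩ := log_prod_max p.roots
  have hlcpos : 0 < ‖p.leadingCoeff‖ := by
    simp [norm_pos_iff, Polynomial.leadingCoeff_ne_zero, hp0]
  have hMpos : 0 < M := by positivity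
  have hS : M ^ 2 ≤ ∑ i ∈ Finset.range (m.natDegree + 1), ((m.coeff i : ℝ)) ^ 2 := by
    rw [← hnsq]; exact landau p
  have hMle : M ≤ Real.sqrt (∑ i ∈ Finset.range (m.natDegree + 1), ((m.coeff i : ℝ)) ^ 2) :=
    (Real.le_sqrt hMpos.le (Finset.sum_nonneg fun _ _ => sq_nonneg _)).mpr hS
  have hloglog : Real.log M ≤
      Real.log (Real.sqrt (∑ i ∈ Finset.range (m.natDegree + 1), ((m.coeff i : ℝ)) ^ 2)) :=
    Real.log_le_log hMpos hMle
  have hlogM : Real.log M = Real.log |(m.leadingCoeff : ℝ)| +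
      ((p.roots.map fun z => Real.log (max ‖z‖ 1)).sum) := by
    rw [hM, Real.log_mul hlcpos.ne' (by linarith), hlog, hlcnorm]
  rw [algLogHeight, ← hp, ← hlogM, one_div, inv_mul_eq_div]
  exact (div_le_div_iff_of_pos_right hdpos).mpr hloglog
end
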